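/- For every natural number m ≥ 1 and every j ∈ {0, 1, …, m}, the j-th derivative of the function x ↦ cos(πx) − P_m(x) vanishes at x = 1/2 and at x = −1/2. -/

import Mathlib

open Real

/-- The summand `a_{j,k} = (-π²/4)^k / (2j+2k)! · C(j+k, j)`. -/
noncomputable def a (j k : ℕ) : ℝ :=
  (-(π ^ 2) / 4) ^ k / (Nat.factorial (2 * j + 2 * k)) * (Nat.choose (j + k) j)

/-- `t_j = Σ_{k=0}^∞ a_{j,k}`. -/
noncomputable def t (j : ℕ) : ℝ := ∑' k : ℕ, a j k

/-- `P_m(x) = Σ_{j=1}^m t_j π^{2j} (1/4 − x²)^j`. -/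
noncomputable def P (m : ℕ) (x : ℝ) : ℝ :=
  ∑ j ∈ Finset.Icc 1 m, t j * π ^ (2 * j) * (1 / 4 - x ^ 2) ^ j

/-! ### Auxiliary lemmas -/

section Aux

open Polynomial Finset

lemma choose_le_two_pow' (n k : ℕ) : n.choose k ≤ 2 ^ n := by
  rcases le_or_gt k n with h | h
  · calc n.choose k ≤ ∑ m ∈ Finset.range (n+1), n.choose m :=
        Finset.single_le_sum (f := fun m => n.choose m) (fun _ _ => Nat.zero_le _)
          (Finset.mem_range.2 (Nat.lt_succ_of_le h))
    _ = 2 ^ n := Nat.sum_range_choose n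
  · simp [Nat.choose_eq_zero_of_lt h]

lemma summable_a (j : ℕ) : Summable (a j) := by
  rw [← summable_abs_iff]
  refine Summable.of_nonneg_of_le (fun k => abs_nonneg _) (fun k => ?_)
    ((Real.summable_pow_div_factorial (π^2/2)).mul_left ((2:ℝ)^j))
  · have h1 : |a j k| = (π^2/4)^k / (Nat.factorial (2*j+2*k)) * (Nat.choose (j+k) j) := by
      unfold a
      rw [abs_mul, abs_div, abs_pow, abs_div]
      have : |(-(π^2) : ℝ)| = π^2 := by rw [abs_neg, abs_of_nonneg (sq_nonneg _)]
      rw [this]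
      simp [abs_of_nonneg, Nat.cast_nonneg, div_pow]
    rw [h1]
    have hb1 : ((Nat.choose (j+k) j : ℝ)) ≤ 2^(j+k) := by
      exact_mod_cast choose_le_two_pow' (j+k) j
    have hb2 : (π^2/4 : ℝ)^k / (Nat.factorial (2*j+2*k)) ≤ (π^2/4)^k / (Nat.factorial k) := by
      apply div_le_div_of_nonneg_left (by positivity) (by positivity)
      exact_mod_cast Nat.factorial_le (by omega)
    calc (π^2/4 : ℝ)^k / (Nat.factorial (2*j+2*k)) * (Nat.choose (j+k) j)
        ≤ (π^2/4)^k / (Nat.factorial k) * 2^(j+k) := by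
          apply mul_le_mul hb2 hb1 (by positivity) (by positivity)
      _ = (2:ℝ)^j * (((π^2/4) * 2)^k / (Nat.factorial k)) := by
          rw [pow_add, mul_pow]; ring
      _ = (2:ℝ)^j * ((π^2/2)^k / (Nat.factorial k)) := by
          rw [show (π ^ 2 / 4 * 2 : ℝ) = π ^ 2 / 2 from by ring]

/-- The `j`-th derivative of `cos (π x)`. -/
lemma iteratedDeriv_cos_pi (n : ℕ) :
    iteratedDeriv n (fun x : ℝ => Real.cos (π * x)) =
      fun x => π ^ n * Real.cos (π * x + n * (π / 2)) := by
  induction n with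
  | zero => simp
  | succ n ih =>
    rw [iteratedDeriv_succ, ih]
    funext x
    have h : HasDerivAt (fun x : ℝ => π ^ n * Real.cos (π * x + n * (π / 2)))
        (π ^ n * (-Real.sin (π * x + n * (π/2)) * π)) x := by
      have : HasDerivAt (fun x : ℝ => π * x + n * (π / 2)) π x := by
        simpa using ((hasDerivAt_id x).const_mul π).add_const (n * (π/2))
      exact (this.cos).const_mul _
    rw [h.deriv]
    have : -Real.sin (π * x + n * (π/2)) = Real.cos (π * x + (n+1) * (π/2)) := by
      rw [show (((n:ℝ)+1)) * (π/2) = n * (π/2) + π/2 by ring, ← add_assoc,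
        Real.cos_add_pi_div_two]
    push_cast
    rw [← this]; ring

lemma iteratedDeriv_polynomial (p : ℝ[X]) (n : ℕ) :
    iteratedDeriv n (fun x => p.eval x) = fun x => (derivative^[n] p).eval x := by
  induction n with
  | zero => simp
  | succ n ih =>
    rw [iteratedDeriv_succ, ih]
    funext x
    rw [Function.iterate_succ_apply']
    exact Polynomial.deriv (p := derivative^[n] p)

lemma iterate_derivative_eval (p : ℝ[X]) (r : ℝ) (n : ℕ) :
    (derivative^[n] p).eval r = (Nat.factorial n : ℝ) * (taylor r p).coeff n := by
  rw [Polynomial.taylor_coeff, ← Polynomial.factorial_smul_hasseDeriv]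
  simp [nsmul_eq_mul]

lemma taylor_pow_eval (i j : ℕ) :
    (taylor (1/2 : ℝ) ((C (1/4:ℝ) - X^2) ^ i)).coeff j =
      (-1 : ℝ) ^ i * (if i ≤ j then ((i.choose (j - i) : ℝ)) else 0) := by
  have h2 : taylor (1/2 : ℝ) (C (1/4:ℝ) - X^2) = -(X^2) - X := by
    simp only [taylor_apply, sub_comp, C_comp, pow_comp, X_comp]
    have e1 : (X + C (1/2:ℝ))^2 = X^2 + X + C (1/4) := by
      have h2' : (2:ℝ[X]) = C 2 := by
        rw [show (2:ℝ[X]) = ((2:ℕ):ℝ[X]) by norm_cast, ← C_eq_natCast]; norm_num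
      rw [add_sq, ← C_pow, h2']
      rw [show C (2:ℝ) * X * C (1/2) = X * C (2 * (1/2):ℝ) by rw [C_mul]; ring]
      norm_num
    rw [e1]; ring
  have h1 : taylor (1/2 : ℝ) ((C (1/4:ℝ) - X^2) ^ i) = (-(X^2) - X) ^ i := by
    rw [← h2]
    exact map_pow (taylorAlgHom (1/2:ℝ)) _ i
  have h3 : (-(X^2) - X : ℝ[X]) ^ i = C ((-1:ℝ)^i) * (X ^ i * (X + 1) ^ i) := by
    rw [show (-(X^2) - X : ℝ[X]) = (-1) * (X * (X+1)) by ring, mul_pow, mul_pow]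
    simp [C_pow]
  rw [h1, h3, coeff_C_mul, coeff_X_pow_mul', mul_ite, mul_zero]
  split_ifs with h
  · rw [coeff_X_add_one_pow]
  · simp

lemma two_eq_C : (2:ℝ[X]) = C 2 := by
  rw [show (2:ℝ[X]) = ((2:ℕ):ℝ[X]) by norm_cast, ← C_eq_natCast]; norm_num

lemma comb_identity (n j : ℕ) (hj : 1 ≤ j) :
    ∑ i ∈ Finset.Icc 1 j, (4:ℝ)^i * (i.choose (j-i)) * (n.choose i)
      = 2^j * ((2*n).choose j) := by
  have hpoly : ((X:ℝ[X]) + 1)^(2*n) = ∑ k ∈ range (n+1),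
      (X^k * (X + C 2)^k) * C ((n.choose k : ℝ)) := by
    rw [pow_mul]
    rw [show ((X:ℝ[X])+1)^2 = X*(X+C 2)+1 by rw [← two_eq_C]; ring]
    rw [add_pow]
    refine Finset.sum_congr rfl fun k _ => ?_
    rw [one_pow, mul_pow, mul_one, C_eq_natCast]
  have hco := congrArg (fun p => p.coeff j) hpoly
  simp only [coeff_X_add_one_pow, finset_sum_coeff, coeff_mul_C, coeff_X_pow_mul',
    coeff_X_add_C_pow] at hco
  set F : ℕ → ℝ := fun i => if 1 ≤ i ∧ i ≤ j then (4:ℝ)^i * (i.choose (j-i)) * (n.choose i) else 0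
    with hF
  have hA : ∑ i ∈ Finset.Icc 1 j, (4:ℝ)^i * (i.choose (j-i)) * (n.choose i)
      = ∑ i ∈ range (n+j+2), F i := by
    rw [show ∑ i ∈ Finset.Icc 1 j, (4:ℝ)^i * (i.choose (j-i)) * (n.choose i)
        = ∑ i ∈ Finset.Icc 1 j, F i from Finset.sum_congr rfl (fun i hi => by
          rw [Finset.mem_Icc] at hi
          rw [hF]; exact (if_pos hi).symm)]
    apply Finset.sum_subset
    · intro i hi; rw [Finset.mem_Icc] at hi; rw [Finset.mem_range]; omega
    · intro i _ hi
      rw [Finset.mem_Icc] at hi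
      rw [hF]; exact if_neg hi
  have hB : ∑ k ∈ range (n+1),
        (if k ≤ j then (2:ℝ)^(k-(j-k)) * (k.choose (j-k) : ℝ) else 0) * (n.choose k)
      = ∑ k ∈ range (n+j+2),
        (if k ≤ j then (2:ℝ)^(k-(j-k)) * (k.choose (j-k) : ℝ) else 0) * (n.choose k) := by
    apply Finset.sum_subset
    · intro i hi; rw [Finset.mem_range] at *; omega
    · intro i _ hi
      rw [Finset.mem_range, not_lt] at hi
      rw [Nat.choose_eq_zero_of_lt (show n < i by omega)]
      simp
  have hC : ∀ i ∈ range (n+j+2), F i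
      = 2^j * ((if i ≤ j then (2:ℝ)^(i-(j-i)) * (i.choose (j-i) : ℝ) else 0) * (n.choose i)) := by
    intro i _
    rw [hF]; simp only
    by_cases h1 : i ≤ j
    · rw [if_pos h1]
      by_cases h0 : 1 ≤ i
      · rw [if_pos ⟨h0, h1⟩]
        by_cases h2 : j - i ≤ i
        · have : (2:ℝ)^j * (2:ℝ)^(i-(j-i)) = 4^i := by
            rw [← pow_add, show j + (i - (j-i)) = 2*i by omega, pow_mul]; norm_num
          rw [← mul_assoc, ← mul_assoc, this]
        · rw [Nat.choose_eq_zero_of_lt (show i < j - i by omega)]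
          simp
      · have : i = 0 := by omega
        subst this
        rw [if_neg (by omega), Nat.choose_eq_zero_of_lt (by omega)]
        simp
    · rw [if_neg h1, if_neg (by omega)]
      simp
  rw [hA, Finset.sum_congr rfl hC, ← Finset.mul_sum, ← hB, ← hco]

/-- The target coefficients on the power-series side. -/
noncomputable def E (j n : ℕ) : ℝ :=
  (-1:ℝ)^n * π^(2*n) * 2^j * (((2*n).choose j) : ℝ) * (Nat.factorial j)
    / (Nat.factorial (2*n)) / 4^n

lemma hasSum_E (j : ℕ) (hj : 1 ≤ j) :
    HasSum (E j) (π^j * Real.cos (π * (1/2) + j * (π/2))) := by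
  rcases Nat.even_or_odd j with ⟨a, ha⟩ | ⟨a, ha⟩
  · subst ha
    have ha1 : 1 ≤ a := by omega
    have hcos : Real.cos (π * (1/2) + ((a + a : ℕ) : ℝ) * (π/2)) = 0 := by
      rw [Real.cos_eq_zero_iff]
      exact ⟨a, by push_cast; ring⟩
    rw [hcos, mul_zero]
    have hinj : Function.Injective (fun l : ℕ => l + a) := add_left_injective a
    rw [← Function.Injective.hasSum_iff hinj ?van]
    case van =>
      intro n hn
      have hn' : n < a := by
        by_contra h
        exact hn ⟨n - a, by simp; omega⟩
      have h0 : (2*n).choose (a+a) = 0 := Nat.choose_eq_zero_of_lt (by omega)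
      simp [E, h0]
    have h0 := (Real.hasSum_cos (π/2)).mul_left ((-1:ℝ)^a * π^(a+a))
    rw [Real.cos_pi_div_two, mul_zero] at h0
    refine h0.congr_fun fun l => ?_
    show E (a+a) (l+a) = _
    have hfac : ((((2*(l+a)).choose (a+a)) : ℝ)) * (Nat.factorial (a+a)) * (Nat.factorial (2*l))
        = (Nat.factorial (2*(l+a))) := by
      have := Nat.choose_mul_factorial_mul_factorial (show a+a ≤ 2*(l+a) by omega)
      rw [show 2*(l+a) - (a+a) = 2*l by omega] at this
      exact_mod_cast this
    have h2l : (Nat.factorial (2*l) : ℝ) ≠ 0 := Nat.cast_ne_zero.2 (Nat.factorial_ne_zero _)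
    have haa : (Nat.factorial (a+a) : ℝ) ≠ 0 := Nat.cast_ne_zero.2 (Nat.factorial_ne_zero _)
    have hch : (0:ℝ) < (((2*(l+a)).choose (a+a)) : ℝ) := by
      exact_mod_cast Nat.choose_pos (show a+a ≤ 2*(l+a) by omega)
    unfold E
    rw [← hfac]
    rw [show (4:ℝ)^(l+a) = 2^(2*l) * 2^(a+a) by
        rw [show (4:ℝ) = 2^2 by norm_num, ← pow_mul, ← pow_add]; ring_nf,
      show π^(2*(l+a)) = π^(2*l) * π^(a+a) by rw [← pow_add]; ring_nf,
      show ((-1:ℝ))^(l+a) = (-1:ℝ)^l * (-1:ℝ)^a by rw [pow_add],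
      div_pow]
    field_simp
  · subst ha
    have hcos : Real.cos (π * (1/2) + ((2*a+1 : ℕ) : ℝ) * (π/2)) = (-1:ℝ)^(a+1) := by
      rw [show π * (1/2) + ((2*a+1 : ℕ) : ℝ) * (π/2) = ((a+1:ℕ):ℝ) * π by push_cast; ring]
      simpa using Real.cos_nat_mul_pi_sub 0 (a+1)
    rw [hcos]
    have hinj : Function.Injective (fun l : ℕ => l + (a+1)) := add_left_injective (a+1)
    rw [← Function.Injective.hasSum_iff hinj ?van]
    case van =>
      intro n hn
      have hn' : n < a + 1 := by
        by_contra h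
        exact hn ⟨n - (a+1), by simp; omega⟩
      have h0 : (2*n).choose (2*a+1) = 0 := Nat.choose_eq_zero_of_lt (by omega)
      simp [E, h0]
    have h0 := (Real.hasSum_sin (π/2)).mul_left ((-1:ℝ)^(a+1) * π^(2*a+1))
    rw [Real.sin_pi_div_two, mul_one] at h0
    have h0' : HasSum (fun l : ℕ => ((-1:ℝ)^(a+1) * π^(2*a+1)) * ((-1) ^ l * (π/2) ^ (2*l+1) / ((Nat.factorial (2*l+1) : ℝ))))
        (π ^ (2*a+1) * (-1:ℝ)^(a+1)) := by
      rw [mul_comm (π ^ (2*a+1))]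
      exact h0
    refine h0'.congr_fun fun l => ?_
    show E (2*a+1) (l+(a+1)) = _
    have hfac : ((((2*(l+(a+1))).choose (2*a+1)) : ℝ)) * (Nat.factorial (2*a+1)) * (Nat.factorial (2*l+1))
        = (Nat.factorial (2*(l+(a+1)))) := by
      have := Nat.choose_mul_factorial_mul_factorial (show 2*a+1 ≤ 2*(l+(a+1)) by omega)
      rw [show 2*(l+(a+1)) - (2*a+1) = 2*l+1 by omega] at this
      exact_mod_cast this
    have h2l : (Nat.factorial (2*l+1) : ℝ) ≠ 0 := Nat.cast_ne_zero.2 (Nat.factorial_ne_zero _)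
    have haa : (Nat.factorial (2*a+1) : ℝ) ≠ 0 := Nat.cast_ne_zero.2 (Nat.factorial_ne_zero _)
    have hch : (0:ℝ) < (((2*(l+(a+1))).choose (2*a+1)) : ℝ) := by
      exact_mod_cast Nat.choose_pos (show 2*a+1 ≤ 2*(l+(a+1)) by omega)
    unfold E
    rw [← hfac]
    rw [show (4:ℝ)^(l+(a+1)) = 2^(2*l+1) * 2^(2*a+1) by
        rw [show (4:ℝ) = 2^2 by norm_num, ← pow_mul, ← pow_add]; ring_nf,
      show π^(2*(l+(a+1))) = π^(2*l+1) * π^(2*a+1) by rw [← pow_add]; ring_nf,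
      show ((-1:ℝ))^(l+(a+1)) = (-1:ℝ)^l * (-1:ℝ)^(a+1) by rw [pow_add],
      div_pow]
    field_simp

/-- The key series identity. -/
lemma key (j : ℕ) (hj : 1 ≤ j) :
    ∑ i ∈ Finset.Icc 1 j,
      (t i * π^(2*i)) * ((-1:ℝ)^i * (i.choose (j-i))) * (Nat.factorial j)
      = π^j * Real.cos (π * (1/2) + j * (π/2)) := by
  classical
  set c : ℕ → ℝ := fun i => π^(2*i) * ((-1:ℝ)^i * (i.choose (j-i))) * (Nat.factorial j) with hc
  set g : ℕ → ℕ → ℝ := fun i n => if i ≤ n then c i * a i (n - i) else 0 with hg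
  have hshift : ∀ i, (g i) ∘ (fun k => k + i) = fun k => c i * a i k := by
    intro i; funext k
    simp only [hg, Function.comp_apply]
    rw [if_pos (Nat.le_add_left i k), Nat.add_sub_cancel]
  have hinj : ∀ i : ℕ, Function.Injective (fun k : ℕ => k + i) :=
    fun i => add_left_injective i
  have hvan : ∀ i : ℕ, Function.support (g i) ⊆ Set.range (fun k : ℕ => k + i) := by
    intro i n hn
    have hin : i ≤ n := by
      by_contra h
      exact hn (by simp only [hg]; rw [if_neg h])
    exact ⟨n - i, by simp; omega⟩
  have hsummable : ∀ i : ℕ, Summable (g i) := by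
    intro i
    rw [← Function.Injective.summable_iff (hinj i) (fun x hx => by
      by_contra h
      exact hx (hvan i h)), hshift i]
    exact (summable_a i).mul_left _
  have hterm : ∀ i : ℕ, (t i * π^(2*i)) * ((-1:ℝ)^i * (i.choose (j-i))) * (Nat.factorial j)
      = ∑' n, g i n := by
    intro i
    have h1 : c i * t i = ∑' k, c i * a i k := (tsum_mul_left).symm
    have h2 : ∑' k, c i * a i k = ∑' n, g i n := by
      rw [← hshift i]
      exact Function.Injective.tsum_eq (hinj i) (hvan i)
    rw [show (t i * π^(2*i)) * ((-1:ℝ)^i * (i.choose (j-i))) * (Nat.factorial j)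
      = c i * t i from by rw [hc]; ring, h1, h2]
  have hpointwise : ∀ n : ℕ, ∑ i ∈ Finset.Icc 1 j, g i n = E j n := by
    intro n
    have hpt : ∀ i ∈ Finset.Icc 1 j, g i n =
        ((Nat.factorial j : ℝ) * (-1)^n * π^(2*n) / (Nat.factorial (2*n)) / 4^n)
          * ((4:ℝ)^i * (i.choose (j-i)) * (n.choose i)) := by
      intro i _
      by_cases h : i ≤ n
      · obtain ⟨k, rfl⟩ : ∃ k, n = i + k := ⟨n - i, by omega⟩
        simp only [hg]
        rw [if_pos h, Nat.add_sub_cancel_left, hc]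
        unfold a
        rw [show 2*i + 2*k = 2*(i+k) by ring]
        rw [show (-(π^2)/4 : ℝ)^k = (-1:ℝ)^k * π^(2*k) / 4^k from by
          rw [div_pow, neg_pow, pow_mul]]
        have hne : (Nat.factorial (2*(i+k)) : ℝ) ≠ 0 :=
          Nat.cast_ne_zero.2 (Nat.factorial_ne_zero _)
        field_simp
        ring
      · have h0 : (n.choose i) = 0 := Nat.choose_eq_zero_of_lt (by omega)
        simp only [hg]
        rw [if_neg h, h0]
        simp
    rw [Finset.sum_congr rfl hpt, ← Finset.mul_sum, comb_identity n j hj]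
    unfold E
    ring
  calc ∑ i ∈ Finset.Icc 1 j,
      (t i * π^(2*i)) * ((-1:ℝ)^i * (i.choose (j-i))) * (Nat.factorial j)
      = ∑ i ∈ Finset.Icc 1 j, ∑' n, g i n := Finset.sum_congr rfl (fun i _ => hterm i)
    _ = ∑' n, ∑ i ∈ Finset.Icc 1 j, g i n := (Summable.tsum_finsetSum (fun i _ => hsummable i)).symm
    _ = ∑' n, E j n := tsum_congr hpointwise
    _ = π^j * Real.cos (π * (1/2) + j * (π/2)) := (hasSum_E j hj).tsum_eq

/-- `P m` as a polynomial. -/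
noncomputable def Qpoly (m : ℕ) : ℝ[X] :=
  ∑ i ∈ Finset.Icc 1 m, C (t i * π^(2*i)) * (C (1/4:ℝ) - X^2)^i

lemma P_eq (m : ℕ) : P m = fun x => (Qpoly m).eval x := by
  funext x
  unfold P Qpoly
  rw [Polynomial.eval_finset_sum]
  exact Finset.sum_congr rfl fun i _ => by simp

lemma iteratedDeriv_sub' (n : ℕ) (f g : ℝ → ℝ) (hf : ContDiff ℝ n f) (hg : ContDiff ℝ n g)
    (x : ℝ) :
    iteratedDeriv n (fun y => f y - g y) x = iteratedDeriv n f x - iteratedDeriv n g x := by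
  rw [← iteratedDerivWithin_univ, ← iteratedDerivWithin_univ, ← iteratedDerivWithin_univ]
  exact iteratedDerivWithin_sub (Set.mem_univ x) uniqueDiffOn_univ
    hf.contDiffWithinAt hg.contDiffWithinAt

lemma contDiff_P (m : ℕ) (n : ℕ) : ContDiff ℝ n (P m) := by
  unfold P
  apply ContDiff.sum
  intro i _
  exact contDiff_const.mul ((contDiff_const.sub (contDiff_id.pow 2)).pow i)

lemma contDiff_cos_pi (n : ℕ) : ContDiff ℝ n (fun x : ℝ => Real.cos (π * x)) :=
  Real.contDiff_cos.comp (contDiff_const.mul contDiff_id)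

/-- The value of the `j`-th derivative of `P m` at `1/2`. -/
lemma iteratedDeriv_P (m j : ℕ) (hj : j ≤ m) :
    iteratedDeriv j (P m) (1/2)
      = ∑ i ∈ Finset.Icc 1 j,
          (t i * π^(2*i)) * ((-1:ℝ)^i * (i.choose (j-i))) * (Nat.factorial j) := by
  rw [P_eq, iteratedDeriv_polynomial]
  show ((Polynomial.derivative^[j] (Qpoly m)).eval (1/2)) = _
  rw [iterate_derivative_eval]
  unfold Qpoly
  rw [map_sum (taylor (1/2:ℝ)), Polynomial.finset_sum_coeff]
  have hterm : ∀ i ∈ Finset.Icc 1 m,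
      ((taylor (1/2:ℝ)) (C (t i * π^(2*i)) * (C (1/4:ℝ) - X^2)^i)).coeff j
      = (t i * π^(2*i)) * ((-1:ℝ)^i * (if i ≤ j then ((i.choose (j-i)) : ℝ) else 0)) := by
    intro i _
    rw [show (C (t i * π^(2*i)) * (C (1/4:ℝ) - X^2)^i : ℝ[X])
        = (t i * π^(2*i)) • ((C (1/4:ℝ) - X^2)^i) from by
      rw [Polynomial.smul_eq_C_mul]]
    rw [map_smul, Polynomial.coeff_smul, taylor_pow_eval]
    simp [smul_eq_mul, mul_assoc]
  rw [Finset.sum_congr rfl hterm]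
  rw [show ∑ i ∈ Finset.Icc 1 m,
      (t i * π^(2*i)) * ((-1:ℝ)^i * (if i ≤ j then ((i.choose (j-i)) : ℝ) else 0))
      = ∑ i ∈ Finset.Icc 1 j,
      (t i * π^(2*i)) * ((-1:ℝ)^i * ((i.choose (j-i)) : ℝ)) from ?_]
  · rw [Finset.mul_sum]
    exact Finset.sum_congr rfl fun i _ => by ring
  · rw [show ∑ i ∈ Finset.Icc 1 j,
        (t i * π^(2*i)) * ((-1:ℝ)^i * ((i.choose (j-i)) : ℝ))
        = ∑ i ∈ Finset.Icc 1 j,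
        (t i * π^(2*i)) * ((-1:ℝ)^i * (if i ≤ j then ((i.choose (j-i)) : ℝ) else 0)) from
      Finset.sum_congr rfl fun i hi => by
        rw [Finset.mem_Icc] at hi
        rw [if_pos hi.2]]
    apply (Finset.sum_subset ?_ ?_).symm
    · intro i hi; rw [Finset.mem_Icc] at *; omega
    · intro i _ hi
      rw [Finset.mem_Icc] at hi
      have : ¬ i ≤ j := by
        rcases Finset.mem_Icc.mp ‹i ∈ Finset.Icc 1 m› with ⟨h1, _⟩
        omega
      rw [if_neg this, mul_zero, mul_zero]

end Aux

/-- For `m ≥ 1` and `0 ≤ j ≤ m`, the `j`-th derivative of `x ↦ cos(πx) − P_m(x)`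
vanishes at `x = 1/2` and at `x = −1/2`. -/
theorem iteratedDeriv_delta_eq_zero (m : ℕ) (hm : 1 ≤ m) (j : ℕ) (hj : j ≤ m) :
    iteratedDeriv j (fun x : ℝ => Real.cos (π * x) - P m x) (1 / 2) = 0 ∧
    iteratedDeriv j (fun x : ℝ => Real.cos (π * x) - P m x) (-(1 / 2)) = 0 := by
  have hhalf : iteratedDeriv j (fun x : ℝ => Real.cos (π * x) - P m x) (1 / 2) = 0 := by
    rw [iteratedDeriv_sub' j _ _ (contDiff_cos_pi j) (contDiff_P m j)]
    rw [iteratedDeriv_cos_pi, iteratedDeriv_P m j hj]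
    rcases Nat.eq_zero_or_pos j with rfl | hj1
    · show π ^ 0 * Real.cos (π * (1/2) + (0:ℕ) * (π / 2)) - _ = 0
      rw [show π * (1/2:ℝ) + (0:ℕ) * (π / 2) = π/2 by push_cast; ring, Real.cos_pi_div_two]
      simp
    · rw [key j hj1]
      ring
  refine ⟨hhalf, ?_⟩
  have heven : (fun x : ℝ => Real.cos (π * x) - P m x)
      = (fun x : ℝ => Real.cos (π * (-x)) - P m (-x)) := by
    funext x
    congr 1
    · rw [mul_neg, Real.cos_neg]
    · unfold P
      simp [neg_sq]
  have := iteratedDeriv_comp_neg j (fun x : ℝ => Real.cos (π * x) - P m x) (-(1/2))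
  rw [neg_neg] at this
  calc iteratedDeriv j (fun x : ℝ => Real.cos (π * x) - P m x) (-(1 / 2))
      = iteratedDeriv j (fun x : ℝ => Real.cos (π * (-x)) - P m (-x)) (-(1 / 2)) := by
        rw [← heven]
    _ = (-1:ℝ)^j • iteratedDeriv j (fun x : ℝ => Real.cos (π * x) - P m x) (1/2) := this
    _ = 0 := by rw [hhalf, smul_zero]
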